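/- Let S be a cancellative semigroup which admits at least one left-Følner net (equivalently, S is a cancellative left-amenable semigroup). Let h be a real-valued function on the set of finite subsets of S such that: (H1) h is subadditive, i.e. h(A ∪ B) ≤ h(A) + h(B) for all finite A, B ⊆ S; (H2) h is right-subinvariant, i.e. h(As) ≤ h(A) for all s ∈ S and all finite A ⊆ S; (H3) there exists a real number M ≥ 0 with h({s}) ≤ M for all s ∈ S. Then there exists a real number λ ≥ 0, depending only on h, such that for every left-Følner net (F_i)_{i∈I} of S, the net (h(F_i)/|F_i|)_{i∈I} converges to λ. -/

import Mathlib

open Filter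

/-- A left-Følner net for a semigroup `S`: a net, indexed by a nonempty directed set `I`,
of nonempty finite subsets `F i` of `S` such that `|s F_i \ F_i| / |F_i| → 0`
for every `s ∈ S`. -/
structure LeftFolnerNet.{u, v} (S : Type u) [Mul S] [DecidableEq S] :
    Type (max u (v + 1)) where
  I : Type v
  [pre : Preorder I]
  [ne : Nonempty I]
  dir : IsDirected I (· ≤ ·)
  F : I → Finset S
  nonempty : ∀ i, (F i).Nonempty
  folner : ∀ s : S,
    Filter.Tendsto (fun i => ((((F i).image (s * ·)) \ F i).card : ℝ) / ((F i).card : ℝ))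
      Filter.atTop (nhds 0)

attribute [instance] LeftFolnerNet.pre LeftFolnerNet.ne

namespace OW

variable {S : Type*} [Semigroup S] [IsCancelMul S] [DecidableEq S]

/-- left translate -/
def lT (s : S) (A : Finset S) : Finset S := A.image (s * ·)
/-- right translate -/
def rT (K : Finset S) (g : S) : Finset S := K.image (· * g)

lemma card_lT (s : S) (A : Finset S) : (lT s A).card = A.card :=
  Finset.card_image_of_injective _ (mul_right_injective s)

lemma card_rT (K : Finset S) (g : S) : (rT K g).card = K.card :=
  Finset.card_image_of_injective _ (mul_left_injective g)

lemma rT_nonempty {K : Finset S} (hK : K.Nonempty) (g : S) : (rT K g).Nonempty :=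
  hK.image _

lemma lT_rT (k : S) (A : Finset S) (g : S) : lT k (rT A g) = rT (lT k A) g := by
  simp only [lT, rT, Finset.image_image]
  congr 1
  ext x
  simp [Function.comp, mul_assoc]

lemma card_lT_sdiff_rT (k : S) (A : Finset S) (g : S) :
    ((lT k (rT A g)) \ (rT A g)).card = ((lT k A) \ A).card := by
  rw [lT_rT]
  unfold rT
  rw [← Finset.image_sdiff _ _ (mul_left_injective g)]
  exact Finset.card_image_of_injective _ (mul_left_injective g)

/-- `|A \ B| = |B \ A|` when `|A| = |B|`. -/
lemma card_sdiff_comm' {A B : Finset S} (hc : A.card = B.card) :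
    (A \ B).card = (B \ A).card := Finset.card_sdiff_comm hc

set_option linter.unusedSectionVars false

/-! ### Unions of lists of finsets -/

/-- Union of a list of finsets. -/
def UL (L : List (Finset S)) : Finset S := L.foldr (· ∪ ·) ∅

/-- Total (multi-)cardinality of a list of finsets, as a real number. -/
def sumCard (L : List (Finset S)) : ℝ := (L.map (fun A => (A.card : ℝ))).sum

@[simp] lemma UL_nil : UL ([] : List (Finset S)) = ∅ := rfl
@[simp] lemma UL_cons (A : Finset S) (L : List (Finset S)) : UL (A :: L) = A ∪ UL L := rfl
@[simp] lemma sumCard_nil : sumCard ([] : List (Finset S)) = 0 := rfl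
@[simp] lemma sumCard_cons (A : Finset S) (L : List (Finset S)) :
    sumCard (A :: L) = A.card + sumCard L := by simp [sumCard]

lemma mem_UL {L : List (Finset S)} {x : S} : x ∈ UL L ↔ ∃ A ∈ L, x ∈ A := by
  induction L with
  | nil => simp
  | cons B L ih => simp [ih]

lemma UL_append (L₁ L₂ : List (Finset S)) : UL (L₁ ++ L₂) = UL L₁ ∪ UL L₂ := by
  induction L₁ with
  | nil => simp
  | cons B L ih => simp [ih, Finset.union_assoc]

lemma sumCard_append (L₁ L₂ : List (Finset S)) :
    sumCard (L₁ ++ L₂) = sumCard L₁ + sumCard L₂ := by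
  induction L₁ with
  | nil => simp
  | cons B L ih => simp [ih]; ring

lemma sumCard_nonneg (L : List (Finset S)) : 0 ≤ sumCard L := by
  induction L with
  | nil => simp
  | cons B L ih => simp; positivity

lemma UL_subset {L : List (Finset S)} {F : Finset S} (hL : ∀ A ∈ L, A ⊆ F) : UL L ⊆ F := by
  intro x hx
  obtain ⟨A, hA, hxA⟩ := mem_UL.mp hx
  exact hL A hA hxA

lemma card_UL_le_sumCard (L : List (Finset S)) : ((UL L).card : ℝ) ≤ sumCard L := by
  induction L with
  | nil => simp
  | cons B L ih =>
    simp only [UL_cons, sumCard_cons]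
    calc ((B ∪ UL L).card : ℝ) ≤ (B.card : ℝ) + ((UL L).card : ℝ) := by
          exact_mod_cast Finset.card_union_le B (UL L)
      _ ≤ B.card + sumCard L := by linarith

lemma foldr_union (L : List (Finset S)) (R : Finset S) :
    L.foldr (· ∪ ·) R = UL L ∪ R := by
  induction L with
  | nil => simp [UL]
  | cons B L ih => simp [ih, Finset.union_assoc]

/-! ### Basic consequences of the hypotheses on `h` -/

variable {h : Finset S → ℝ}

lemma h_nonneg (H1 : ∀ A B : Finset S, h (A ∪ B) ≤ h A + h B) (A : Finset S) : 0 ≤ h A := by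
  have := H1 A A
  simp only [Finset.union_self] at this
  linarith

lemma h_le_M_card {M : ℝ} (H1 : ∀ A B : Finset S, h (A ∪ B) ≤ h A + h B)
    (hM : ∀ s : S, h {s} ≤ M) :
    ∀ A : Finset S, A.Nonempty → h A ≤ M * A.card := by
  intro A hA
  induction hA using Finset.Nonempty.cons_induction with
  | singleton a => simpa using hM a
  | cons a s ha hs ih =>
    have : (Finset.cons a s ha) = {a} ∪ s := by
      ext x; simp [Finset.mem_cons, or_comm]
    have hcard : ((Finset.cons a s ha).card : ℝ) = s.card + 1 := by
      rw [Finset.card_cons]; push_cast; ring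
    rw [this] at hcard ⊢
    rw [hcard]
    calc h ({a} ∪ s) ≤ h {a} + h s := H1 _ _
      _ ≤ M + M * s.card := by have := hM a; linarith
      _ = M * ((s.card : ℝ) + 1) := by ring

lemma h_foldr (H1 : ∀ A B : Finset S, h (A ∪ B) ≤ h A + h B) :
    ∀ (L : List (Finset S)) (R : Finset S),
      h (L.foldr (· ∪ ·) R) ≤ (L.map h).sum + h R := by
  intro L
  induction L with
  | nil => simp
  | cons B L ih =>
    intro R
    simp only [List.foldr_cons, List.map_cons, List.sum_cons]
    calc h (B ∪ L.foldr (· ∪ ·) R) ≤ h B + h (L.foldr (· ∪ ·) R) := H1 _ _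
      _ ≤ h B + ((L.map h).sum + h R) := by have := ih R; linarith
      _ = h B + (L.map h).sum + h R := by ring

lemma sum_map_h_le (c : ℝ) :
    ∀ L : List (Finset S), (∀ A ∈ L, h A ≤ c * A.card) → (L.map h).sum ≤ c * sumCard L := by
  intro L
  induction L with
  | nil => simp
  | cons B L ih =>
    intro hL
    simp only [List.map_cons, List.sum_cons, sumCard_cons]
    have h1 := hL B (by simp)
    have h2 := ih (fun A hA => hL A (by simp [hA]))
    calc h B + (L.map h).sum ≤ c * B.card + c * sumCard L := by linarith
      _ = c * (B.card + sumCard L) := by ring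

/-! ### The one-scale covering (greedy ε-disjoint selection + double counting) -/

/-- The set of good centers: `g ∈ E` whose `K`-translate is inside `E`. -/
def Good (E K : Finset S) : Finset S := E.filter (fun g => rT K g ⊆ E)

lemma rT_subset_of_mem_Good {E K : Finset S} {g : S} (hg : g ∈ Good E K) : rT K g ⊆ E :=
  (Finset.mem_filter.mp hg).2

/-- Bound on the number of bad centers in terms of the left boundaries. -/
lemma good_card_bound (E K : Finset S) :
    (E.card : ℝ) - ∑ k ∈ K, ((lT k E \ E).card : ℝ) ≤ ((Good E K).card : ℝ) := by
  classical
  have hsplit : (Good E K).card + (E.filter (fun g => ¬ rT K g ⊆ E)).card = E.card :=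
    Finset.card_filter_add_card_filter_not _
  have hbad : (E.filter (fun g => ¬ rT K g ⊆ E)) ⊆
      K.biUnion (fun k => E.filter (fun g => k * g ∉ E)) := by
    intro g hg
    rw [Finset.mem_filter] at hg
    obtain ⟨hgE, hng⟩ := hg
    rw [Finset.mem_biUnion]
    have : ∃ k ∈ K, k * g ∉ E := by
      by_contra hc
      push_neg at hc
      exact hng (fun x hx => by
        obtain ⟨k, hk, rfl⟩ := Finset.mem_image.mp hx
        exact hc k hk)
    obtain ⟨k, hk, hkg⟩ := this
    exact ⟨k, hk, Finset.mem_filter.mpr ⟨hgE, hkg⟩⟩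
  have hcard_eq : ∀ k : S, (E.filter (fun g => k * g ∉ E)).card = (lT k E \ E).card := by
    intro k
    have himg : (E.filter (fun g => k * g ∉ E)).image (k * ·) = lT k E \ E := by
      ext x
      simp only [Finset.mem_image, Finset.mem_filter, Finset.mem_sdiff, lT]
      constructor
      · rintro ⟨g, ⟨hgE, hkg⟩, rfl⟩
        exact ⟨⟨g, hgE, rfl⟩, hkg⟩
      · rintro ⟨⟨g, hgE, rfl⟩, hx⟩
        exact ⟨g, ⟨hgE, hx⟩, rfl⟩
    rw [← himg]
    exact (Finset.card_image_of_injective _ (mul_right_injective k)).symm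
  have hb2 : ((E.filter (fun g => ¬ rT K g ⊆ E)).card : ℝ) ≤
      ∑ k ∈ K, ((lT k E \ E).card : ℝ) := by
    calc ((E.filter (fun g => ¬ rT K g ⊆ E)).card : ℝ)
        ≤ ((K.biUnion (fun k => E.filter (fun g => k * g ∉ E))).card : ℝ) := by
          exact_mod_cast Finset.card_le_card hbad
      _ ≤ ∑ k ∈ K, ((E.filter (fun g => k * g ∉ E)).card : ℝ) := by
          exact_mod_cast Finset.card_biUnion_le
      _ = ∑ k ∈ K, ((lT k E \ E).card : ℝ) := by
          exact Finset.sum_congr rfl (fun k _ => by rw [hcard_eq k])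
  have := hsplit
  have : ((Good E K).card : ℝ) + ((E.filter (fun g => ¬ rT K g ⊆ E)).card : ℝ) = E.card := by
    exact_mod_cast hsplit
  linarith

/-- Greedy construction of a maximal ε-disjoint family of translates. -/
lemma greedy {K : Finset S} (hK : K.Nonempty) {ε : ℝ} (hε0 : 0 < ε) (hε1 : ε < 1)
    (E : Finset S) :
    ∃ C : Finset S, C ⊆ Good E K ∧
      (1 - ε) * (C.card * K.card) ≤ ((C.biUnion (rT K)).card : ℝ) ∧
      ∀ g ∈ Good E K, ¬ ((1 - ε) * K.card ≤ (((rT K g) \ C.biUnion (rT K)).card : ℝ)) := by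
  classical
  suffices H : ∀ n : ℕ, ∀ C : Finset S, C ⊆ Good E K →
      (1 - ε) * (C.card * K.card) ≤ ((C.biUnion (rT K)).card : ℝ) →
      (E \ C.biUnion (rT K)).card ≤ n →
      ∃ C' : Finset S, C' ⊆ Good E K ∧
        (1 - ε) * (C'.card * K.card) ≤ ((C'.biUnion (rT K)).card : ℝ) ∧
        ∀ g ∈ Good E K, ¬ ((1 - ε) * K.card ≤ (((rT K g) \ C'.biUnion (rT K)).card : ℝ)) by
    exact H (E \ (∅ : Finset S).biUnion (rT K)).card ∅ (by simp) (by simp) le_rfl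
  intro n
  induction n with
  | zero =>
    intro C hC hinv hn
    refine ⟨C, hC, hinv, fun g hg hge => ?_⟩
    have hsub : rT K g \ C.biUnion (rT K) ⊆ E \ C.biUnion (rT K) :=
      Finset.sdiff_subset_sdiff (rT_subset_of_mem_Good hg) le_rfl
    have h0 : ((rT K g \ C.biUnion (rT K)).card : ℝ) ≤ 0 := by
      have := Finset.card_le_card hsub
      have h2 : (E \ C.biUnion (rT K)).card = 0 := Nat.le_zero.mp hn
      exact_mod_cast le_trans this (le_of_eq h2)
    have hpos : (0 : ℝ) < (1 - ε) * K.card := by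
      apply mul_pos (by linarith)
      exact_mod_cast Nat.cast_pos.mpr (Finset.card_pos.mpr hK)
    linarith
  | succ n ih =>
    intro C hC hinv hn
    by_cases hadd : ∃ g ∈ Good E K, (1 - ε) * K.card ≤ (((rT K g) \ C.biUnion (rT K)).card : ℝ)
    · obtain ⟨g, hg, hge⟩ := hadd
      set U := C.biUnion (rT K) with hU
      set C' := insert g C with hC'
      have hU' : C'.biUnion (rT K) = rT K g ∪ U := Finset.biUnion_insert
      -- the new translate adds at least (1-ε)|K| new elements
      have hcardU' : ((rT K g \ U).card : ℝ) + (U.card : ℝ) = ((C'.biUnion (rT K)).card : ℝ) := by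
        rw [hU']
        exact_mod_cast Finset.card_sdiff_add_card (rT K g) U
      have hinv' : (1 - ε) * (C'.card * K.card) ≤ ((C'.biUnion (rT K)).card : ℝ) := by
        have hle : (C'.card : ℝ) ≤ C.card + 1 := by
          exact_mod_cast Finset.card_insert_le g C
        have h1ε : (0:ℝ) ≤ 1 - ε := by linarith
        have hKc : (0:ℝ) ≤ (K.card : ℝ) := Nat.cast_nonneg _
        have key : (1 - ε) * ((C'.card : ℝ) * K.card) ≤ (1 - ε) * (((C.card : ℝ) + 1) * K.card) :=
          mul_le_mul_of_nonneg_left (mul_le_mul_of_nonneg_right hle hKc) h1ε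
        have hring : (1 - ε) * (((C.card : ℝ) + 1) * K.card)
            = (1 - ε) * ((C.card : ℝ) * K.card) + (1 - ε) * K.card := by ring
        linarith
      -- strict decrease of the uncovered part
      have hx : (rT K g \ U).Nonempty := by
        rw [← Finset.card_pos]
        by_contra hc
        push_neg at hc
        have : (rT K g \ U).card = 0 := Nat.le_zero.mp hc
        rw [this] at hge
        have hpos : (0 : ℝ) < (1 - ε) * K.card := by
          apply mul_pos (by linarith)
          exact_mod_cast Nat.cast_pos.mpr (Finset.card_pos.mpr hK)
        simp at hge
        linarith
      obtain ⟨x, hxmem⟩ := hx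
      have hxE : x ∈ E := rT_subset_of_mem_Good hg (Finset.mem_sdiff.mp hxmem).1
      have hdec : (E \ C'.biUnion (rT K)).card ≤ n := by
        have hss : E \ C'.biUnion (rT K) ⊂ E \ U := by
          constructor
          · apply Finset.sdiff_subset_sdiff le_rfl
            rw [hU']
            exact Finset.subset_union_right
          · intro hsub2
            have hx1 : x ∈ E \ U := Finset.mem_sdiff.mpr ⟨hxE, (Finset.mem_sdiff.mp hxmem).2⟩
            have hx2 := hsub2 hx1
            rw [Finset.mem_sdiff, hU'] at hx2
            exact hx2.2 (Finset.mem_union_left _ (Finset.mem_sdiff.mp hxmem).1)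
        have := Finset.card_lt_card hss
        omega
      exact ih C' (Finset.insert_subset hg hC) hinv' hdec
    · push_neg at hadd
      exact ⟨C, hC, hinv, fun g hg => not_le.mpr (hadd g hg)⟩

/-- Double counting: if every good center's translate meets `U` in at least `ε|K|` points,
then `ε |Good| ≤ |U|`. -/
lemma counting {K : Finset S} (hK : K.Nonempty) {ε : ℝ} (hε0 : 0 < ε)
    {U : Finset S} (G : Finset S)
    (hG : ∀ g ∈ G, ε * K.card ≤ ((rT K g ∩ U).card : ℝ)) :
    ε * G.card ≤ (U.card : ℝ) := by
  classical
  have key : ∀ u : S, (G.filter (fun g => u ∈ rT K g)).card ≤ K.card := by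
    intro u
    have hex : ∀ g ∈ G.filter (fun g => u ∈ rT K g), ∃ k, k ∈ K ∧ k * g = u := by
      intro g hg
      have := (Finset.mem_filter.mp hg).2
      obtain ⟨k, hk, hkg⟩ := Finset.mem_image.mp this
      exact ⟨k, hk, hkg⟩
    apply Finset.card_le_card_of_injOn
      (fun g => if hg : ∃ k, k ∈ K ∧ k * g = u then hg.choose else g)
    · intro g hg
      have hx := hex g hg
      simp only [dif_pos hx]
      exact hx.choose_spec.1
    · intro g hg g' hg' heq
      have hx := hex g hg
      have hx' := hex g' hg'
      simp only [dif_pos hx, dif_pos hx'] at heq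
      have e1 := hx.choose_spec.2
      have e2 := hx'.choose_spec.2
      rw [heq] at e1
      exact mul_left_cancel (e1.trans e2.symm)
  have hsum : ∑ g ∈ G, ((rT K g ∩ U).card : ℝ) ≤ (U.card : ℝ) * K.card := by
    have swap : ∑ g ∈ G, ((rT K g ∩ U).card : ℕ)
        = ∑ u ∈ U, (G.filter (fun g => u ∈ rT K g)).card := by
      have e1 : ∀ g, (rT K g ∩ U).card = ∑ u ∈ U, if u ∈ rT K g then 1 else 0 := by
        intro g
        rw [Finset.inter_comm, ← Finset.filter_mem_eq_inter, Finset.card_filter]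
      have e2 : ∀ u, (G.filter (fun g => u ∈ rT K g)).card
          = ∑ g ∈ G, if u ∈ rT K g then 1 else 0 := by
        intro u
        rw [Finset.card_filter]
      simp only [e1, e2]
      exact Finset.sum_comm
    have hub : ∑ u ∈ U, (G.filter (fun g => u ∈ rT K g)).card ≤ ∑ _u ∈ U, K.card :=
      Finset.sum_le_sum (fun u _ => key u)
    have : ∑ g ∈ G, ((rT K g ∩ U).card : ℕ) ≤ U.card * K.card := by
      rw [swap]
      simpa [Finset.sum_const, smul_eq_mul] using hub
    calc ∑ g ∈ G, ((rT K g ∩ U).card : ℝ) = ((∑ g ∈ G, (rT K g ∩ U).card : ℕ) : ℝ) := by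
          push_cast; ring
      _ ≤ ((U.card * K.card : ℕ) : ℝ) := by exact_mod_cast this
      _ = (U.card : ℝ) * K.card := by push_cast; ring
  have hlow : ε * K.card * G.card ≤ ∑ g ∈ G, ((rT K g ∩ U).card : ℝ) := by
    calc ε * K.card * G.card = ∑ _g ∈ G, ε * K.card := by
          rw [Finset.sum_const, nsmul_eq_mul]; ring
      _ ≤ _ := Finset.sum_le_sum hG
  have hKpos : (0:ℝ) < K.card := by exact_mod_cast Finset.card_pos.mpr hK
  have : ε * G.card * K.card ≤ (U.card : ℝ) * K.card := by nlinarith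
  exact le_of_mul_le_mul_right this hKpos

lemma UL_toList_map (C : Finset S) (f : S → Finset S) :
    UL (C.toList.map f) = C.biUnion f := by
  ext x
  rw [mem_UL, Finset.mem_biUnion]
  constructor
  · rintro ⟨A, hA, hx⟩
    obtain ⟨g, hg, rfl⟩ := List.mem_map.mp hA
    exact ⟨g, Finset.mem_toList.mp hg, hx⟩
  · rintro ⟨g, hg, hx⟩
    exact ⟨f g, List.mem_map.mpr ⟨g, Finset.mem_toList.mpr hg, rfl⟩, hx⟩

lemma sumCard_toList_map (C : Finset S) (f : S → Finset S) :
    sumCard (C.toList.map f) = ∑ g ∈ C, ((f g).card : ℝ) := by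
  rw [sumCard, List.map_map]
  exact Finset.sum_map_toList C (fun g => ((f g).card : ℝ))

/-- One scale of the Ornstein–Weiss covering: inside any finite set `E`, there is an
ε-disjoint family of `K`-translates, contained in `E`, covering at least
`ε * |Good E K|` points. -/
lemma stage {K : Finset S} (hK : K.Nonempty) {ε : ℝ} (hε0 : 0 < ε) (hε1 : ε < 1)
    (E : Finset S) :
    ∃ L : List (Finset S),
      (∀ A ∈ L, ∃ g : S, A = rT K g ∧ A ⊆ E) ∧
      (1 - ε) * sumCard L ≤ ((UL L).card : ℝ) ∧
      UL L ⊆ E ∧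
      ε * ((Good E K).card : ℝ) ≤ ((UL L).card : ℝ) := by
  classical
  obtain ⟨C, hCG, hCinv, hCmax⟩ := greedy hK hε0 hε1 E
  set U := C.biUnion (rT K) with hU
  refine ⟨C.toList.map (rT K), ?_, ?_, ?_, ?_⟩
  · intro A hA
    obtain ⟨g, hg, rfl⟩ := List.mem_map.mp hA
    exact ⟨g, rfl, rT_subset_of_mem_Good (hCG (Finset.mem_toList.mp hg))⟩
  · rw [UL_toList_map, sumCard_toList_map]
    have : ∑ g ∈ C, ((rT K g).card : ℝ) = (C.card : ℝ) * K.card := by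
      rw [Finset.sum_congr rfl (fun g _ => by rw [card_rT] : ∀ g ∈ C, ((rT K g).card : ℝ) = (K.card : ℝ))]
      rw [Finset.sum_const, nsmul_eq_mul]
    rw [this]
    exact hCinv
  · rw [UL_toList_map]
    intro x hx
    obtain ⟨g, hg, hx⟩ := Finset.mem_biUnion.mp hx
    exact rT_subset_of_mem_Good (hCG hg) hx
  · rw [UL_toList_map]
    apply counting hK hε0
    intro g hg
    have hmax := hCmax g hg
    push_neg at hmax
    have hpart : ((rT K g ∩ U).card : ℝ) + ((rT K g \ U).card : ℝ) = (K.card : ℝ) := by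
      have := Finset.card_inter_add_card_sdiff (rT K g) U
      rw [card_rT] at this
      exact_mod_cast this
    have : ((rT K g \ U).card : ℝ) < (1 - ε) * K.card := hmax
    linarith [hpart]

lemma sumCard_map_le (f : Finset S → Finset S) {c' : ℝ} (hc' : 0 ≤ c') :
    ∀ L : List (Finset S), (∀ A ∈ L, ((f A).card : ℝ) ≤ c' * A.card) →
      sumCard (L.map f) ≤ c' * sumCard L := by
  intro L
  induction L with
  | nil => simp
  | cons B L ih =>
    intro hL
    simp only [List.map_cons, sumCard_cons]
    have h1 := hL B (by simp)
    have h2 := ih (fun A hA => hL A (by simp [hA]))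
    calc ((f B).card : ℝ) + sumCard (L.map f) ≤ c' * B.card + c' * sumCard L := by linarith
      _ = c' * (B.card + sumCard L) := by ring

lemma h_rT {h : Finset S → ℝ} (H2 : ∀ (s : S) (A : Finset S), h (A.image (· * s)) ≤ h A)
    (K : Finset S) (g : S) : h (rT K g) ≤ h K := H2 g K

/-- The multi-scale Ornstein–Weiss covering lemma. -/
lemma multi {h : Finset S → ℝ} (H2 : ∀ (s : S) (A : Finset S), h (A.image (· * s)) ≤ h A)
    {ε c : ℝ} (hε0 : 0 < ε) (hε2 : ε ≤ 1/2) (m : ℕ) (KK : ℕ → Finset S)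
    (hKne : ∀ j, j < m → (KK j).Nonempty)
    (hKh : ∀ j, j < m → h (KK j) ≤ c * (KK j).card)
    (hKinv : ∀ i j : ℕ, i < j → j < m → ∀ k ∈ KK i,
      ((lT k (KK j) \ KK j).card : ℝ) ≤ (ε^2 * (1-ε) / (8 * (KK i).card)) * (KK j).card)
    (F : Finset S) (hF : F.Nonempty)
    (hFinv : ∀ j, j < m → ∀ k ∈ KK j,
      ((lT k F \ F).card : ℝ) ≤ (ε^2 / (8 * (KK j).card)) * F.card) :
    ∀ t : ℕ, t ≤ m → ∃ L : List (Finset S),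
      (∀ A ∈ L, A ⊆ F ∧ h A ≤ c * A.card ∧
        ∀ i, i < m - t → ∀ k ∈ KK i,
          ((lT k A \ A).card : ℝ) ≤ (ε^2 * (1-ε) / (8 * (KK i).card)) * A.card) ∧
      (1 - ε) * sumCard L ≤ ((UL L).card : ℝ) ∧ UL L ⊆ F ∧
      ((F \ UL L).card : ℝ) ≤ max (ε * F.card) ((1 - ε/2)^t * F.card) := by
  have hε1 : ε < 1 := by linarith
  have h1ε : (0:ℝ) < 1 - ε := by linarith
  intro t
  induction t with
  | zero =>
    intro _
    refine ⟨[], by simp, by simp, by simp, ?_⟩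
    simp only [UL_nil, Finset.sdiff_empty, pow_zero, one_mul]
    exact le_max_right _ _
  | succ t ih =>
    intro ht
    obtain ⟨L, hL, hLdis, hLsub, hLcov⟩ := ih (by omega)
    set E := F \ UL L with hEdef
    by_cases hstop : (E.card : ℝ) ≤ ε * F.card
    · refine ⟨L, ?_, hLdis, hLsub, le_trans hstop (le_max_left _ _)⟩
      intro A hA
      obtain ⟨h1, h2, h3⟩ := hL A hA
      exact ⟨h1, h2, fun i hi => h3 i (by omega)⟩
    · push_neg at hstop
      set j := m - (t+1) with hjdef
      have hjm : j < m := by omega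
      have hjmt : j < m - t := by omega
      have hKj : (KK j).Nonempty := hKne j hjm
      have hKjpos : (0:ℝ) < ((KK j).card : ℝ) := by
        exact_mod_cast Finset.card_pos.mpr hKj
      have hFpos : (0:ℝ) < (F.card : ℝ) := by
        exact_mod_cast Finset.card_pos.mpr hF
      have hEF : E ⊆ F := Finset.sdiff_subset
      have hEcard : (E.card : ℝ) ≤ (F.card : ℝ) := by
        exact_mod_cast Finset.card_le_card hEF
      have hEne : E.Nonempty := by
        rw [← Finset.card_pos]
        have : (0:ℝ) < (E.card : ℝ) := lt_trans (by positivity) hstop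
        exact_mod_cast this
      have hsumL : sumCard L ≤ (F.card : ℝ) / (1 - ε) := by
        rw [le_div_iff₀ h1ε]
        have : ((UL L).card : ℝ) ≤ F.card := by exact_mod_cast Finset.card_le_card hLsub
        nlinarith [hLdis]
      -- invariance of E with respect to KK j
      have hEinv : ∀ k ∈ KK j, ((lT k E \ E).card : ℝ) ≤ (ε / (4 * (KK j).card)) * E.card := by
        intro k hk
        have hsub : lT k E \ E ⊆ (lT k F \ F) ∪ UL (L.map (fun A => A \ lT k A)) := by
          intro x hx
          rw [Finset.mem_sdiff] at hx
          obtain ⟨hx1, hx2⟩ := hx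
          obtain ⟨e, he, rfl⟩ := Finset.mem_image.mp hx1
          have heF : e ∈ F := hEF he
          by_cases hxF : k * e ∈ F
          · have hxU : k * e ∈ UL L := by
              by_contra hc
              exact hx2 (Finset.mem_sdiff.mpr ⟨hxF, hc⟩)
            obtain ⟨A, hA, hxA⟩ := mem_UL.mp hxU
            apply Finset.mem_union_right
            rw [mem_UL]
            refine ⟨A \ lT k A, List.mem_map.mpr ⟨A, hA, rfl⟩, ?_⟩
            rw [Finset.mem_sdiff]
            refine ⟨hxA, fun hcon => ?_⟩
            obtain ⟨a, ha, hae⟩ := Finset.mem_image.mp hcon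
            have haeq : a = e := mul_left_cancel hae
            subst haeq
            exact (Finset.mem_sdiff.mp he).2 (mem_UL.mpr ⟨A, hA, ha⟩)
          · exact Finset.mem_union_left _
              (Finset.mem_sdiff.mpr ⟨Finset.mem_image.mpr ⟨e, heF, rfl⟩, hxF⟩)
        have hcard1 : ((lT k E \ E).card : ℝ)
            ≤ ((lT k F \ F).card : ℝ) + sumCard (L.map (fun A => A \ lT k A)) := by
          calc ((lT k E \ E).card : ℝ)
              ≤ (((lT k F \ F) ∪ UL (L.map (fun A => A \ lT k A))).card : ℝ) := by
                exact_mod_cast Finset.card_le_card hsub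
            _ ≤ ((lT k F \ F).card : ℝ) + ((UL (L.map (fun A => A \ lT k A))).card : ℝ) := by
                exact_mod_cast Finset.card_union_le _ _
            _ ≤ _ := by linarith [card_UL_le_sumCard (L.map (fun A => A \ lT k A))]
        have hquotpos : (0:ℝ) ≤ ε^2 * (1-ε) / (8 * (KK j).card) := by positivity
        have hsum2 : sumCard (L.map (fun A => A \ lT k A))
            ≤ (ε^2 * (1-ε) / (8 * (KK j).card)) * sumCard L := by
          apply sumCard_map_le _ hquotpos
          intro A hA
          have hAcard : ((A \ lT k A).card : ℝ) = ((lT k A \ A).card : ℝ) := by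
            exact_mod_cast card_sdiff_comm' (card_lT k A).symm
          rw [hAcard]
          exact (hL A hA).2.2 j hjmt k hk
        have hFb := hFinv j hjm k hk
        have hchain : ((lT k E \ E).card : ℝ) ≤ (ε^2 / (4 * (KK j).card)) * F.card := by
          have e1 : (ε^2 * (1-ε) / (8 * (KK j).card)) * sumCard L
              ≤ (ε^2 * (1-ε) / (8 * (KK j).card)) * ((F.card : ℝ) / (1 - ε)) :=
            mul_le_mul_of_nonneg_left hsumL hquotpos
          have e2 : (ε^2 * (1-ε) / (8 * (KK j).card)) * ((F.card : ℝ) / (1 - ε))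
              = (ε^2 / (8 * (KK j).card)) * F.card := by
            field_simp
          have e3 : (ε^2 / (8 * (KK j).card)) * F.card + (ε^2 / (8 * (KK j).card)) * F.card
              = (ε^2 / (4 * (KK j).card)) * F.card := by
            field_simp
            ring
          linarith
        -- ε * F.card < E.card
        have efinal : (ε^2 / (4 * (KK j).card)) * F.card ≤ (ε / (4 * (KK j).card)) * E.card := by
          have : (ε / (4 * (KK j).card)) * (ε * F.card) ≤ (ε / (4 * (KK j).card)) * E.card :=
            mul_le_mul_of_nonneg_left (le_of_lt hstop) (by positivity)
          calc (ε^2 / (4 * (KK j).card)) * F.card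
              = (ε / (4 * (KK j).card)) * (ε * F.card) := by ring
            _ ≤ _ := this
        linarith
      -- lower bound on the good set
      have hgood : (1 - ε/4) * (E.card : ℝ) ≤ ((Good E (KK j)).card : ℝ) := by
        have hgb := good_card_bound E (KK j)
        have hsumk : ∑ k ∈ KK j, ((lT k E \ E).card : ℝ)
            ≤ ((KK j).card : ℝ) * ((ε / (4 * (KK j).card)) * E.card) := by
          calc ∑ k ∈ KK j, ((lT k E \ E).card : ℝ)
              ≤ ∑ _k ∈ KK j, (ε / (4 * (KK j).card)) * (E.card : ℝ) :=
                Finset.sum_le_sum (fun k hk => hEinv k hk)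
            _ = ((KK j).card : ℝ) * ((ε / (4 * (KK j).card)) * E.card) := by
                rw [Finset.sum_const, nsmul_eq_mul]
        have heq4 : ((KK j).card : ℝ) * ((ε / (4 * (KK j).card)) * E.card) = (ε/4) * E.card := by
          field_simp
        rw [heq4] at hsumk
        linarith
      obtain ⟨L', hL'tile, hL'dis, hL'sub, hL'cov⟩ := stage hKj hε0 hε1 E
      have hcov2 : (ε/2) * (E.card : ℝ) ≤ ((UL L').card : ℝ) := by
        have hEcast : (0:ℝ) ≤ (E.card : ℝ) := Nat.cast_nonneg _
        have step1 : (ε/2) * (E.card : ℝ) ≤ ε * ((1 - ε/4) * E.card) := by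
          nlinarith [mul_nonneg (mul_nonneg hε0.le (show (0:ℝ) ≤ 1/2 - ε/4 by linarith)) hEcast]
        have step2 : ε * ((1 - ε/4) * (E.card : ℝ)) ≤ ε * ((Good E (KK j)).card : ℝ) :=
          mul_le_mul_of_nonneg_left hgood (le_of_lt hε0)
        linarith [hL'cov]
      refine ⟨L' ++ L, ?_, ?_, ?_, ?_⟩
      · intro A hA
        rcases List.mem_append.mp hA with hA' | hA'
        · obtain ⟨g, rfl, hAE⟩ := hL'tile A hA'
          refine ⟨subset_trans hAE hEF, ?_, ?_⟩
          · have h1 := h_rT H2 (KK j) g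
            have h2 := hKh j hjm
            rw [card_rT]
            linarith
          · intro i hi k hk
            have hij : i < j := by omega
            rw [card_lT_sdiff_rT k (KK j) g, card_rT]
            exact hKinv i j hij hjm k hk
        · obtain ⟨g1, g2, g3⟩ := hL A hA'
          exact ⟨g1, g2, fun i hi => g3 i (by omega)⟩
      · rw [UL_append, sumCard_append]
        have hdisj : Disjoint (UL L') (UL L) := by
          rw [Finset.disjoint_left]
          intro x hx1 hx2
          exact (Finset.mem_sdiff.mp (hL'sub hx1)).2 hx2
        rw [Finset.card_union_of_disjoint hdisj]
        push_cast
        linarith [hL'dis, hLdis, sumCard_nonneg L', sumCard_nonneg L]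
      · rw [UL_append]
        exact Finset.union_subset (subset_trans hL'sub hEF) hLsub
      · rw [UL_append]
        have heq : F \ (UL L' ∪ UL L) = E \ UL L' := by
          rw [hEdef]
          ext x
          simp only [Finset.mem_sdiff, Finset.mem_union]
          tauto
        rw [heq]
        have hcardE : ((E \ UL L').card : ℝ) = (E.card : ℝ) - ((UL L').card : ℝ) := by
          rw [Finset.card_sdiff_of_subset hL'sub]
          have := Finset.card_le_card hL'sub
          push_cast [this]
          ring
        have hEb : (E.card : ℝ) ≤ (1 - ε/2)^t * F.card := by
          rcases le_or_gt ((1 - ε/2)^t * (F.card : ℝ)) (ε * F.card) with hcmp | hcmp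
          · exfalso
            have := hLcov
            rw [max_eq_left hcmp] at this
            linarith
          · have := hLcov
            rw [max_eq_right (le_of_lt hcmp)] at this
            exact this
        have hfac : (0:ℝ) ≤ 1 - ε/2 := by linarith
        calc ((E \ UL L').card : ℝ) = (E.card : ℝ) - ((UL L').card : ℝ) := hcardE
          _ ≤ (E.card : ℝ) - (ε/2) * E.card := by linarith
          _ = (1 - ε/2) * E.card := by ring
          _ ≤ (1 - ε/2) * ((1 - ε/2)^t * F.card) := mul_le_mul_of_nonneg_left hEb hfac
          _ = (1 - ε/2)^(t+1) * F.card := by ring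
          _ ≤ max (ε * F.card) ((1 - ε/2)^(t+1) * F.card) := le_max_right _ _

/-- Deduce the estimate on `h F` from an Ornstein–Weiss covering. -/
lemma cover_bound {h : Finset S → ℝ} (H1 : ∀ A B : Finset S, h (A ∪ B) ≤ h A + h B)
    {M c ε : ℝ} (hM : 0 ≤ M) (hc : 0 ≤ c)
    (hMcard : ∀ A : Finset S, A.Nonempty → h A ≤ M * A.card)
    (hε0 : 0 < ε) (hε1 : ε < 1)
    {F : Finset S} (hF : F.Nonempty)
    {L : List (Finset S)}
    (htile : ∀ A ∈ L, A ⊆ F ∧ h A ≤ c * A.card)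
    (hdis : (1 - ε) * sumCard L ≤ ((UL L).card : ℝ))
    (hsub : UL L ⊆ F)
    (hcov : ((F \ UL L).card : ℝ) ≤ ε * F.card) :
    h F ≤ (M * ε + c / (1 - ε)) * F.card := by
  have h1ε : (0:ℝ) < 1 - ε := by linarith
  have hULF : ((UL L).card : ℝ) ≤ (F.card : ℝ) := by
    exact_mod_cast Finset.card_le_card hsub
  have hsumF : sumCard L ≤ (F.card : ℝ) / (1 - ε) := by
    rw [le_div_iff₀ h1ε]
    have hcomm : sumCard L * (1 - ε) = (1 - ε) * sumCard L := by ring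
    linarith
  have hsums : (L.map h).sum ≤ c * sumCard L :=
    sum_map_h_le c L (fun A hA => (htile A hA).2)
  have hcsum : c * sumCard L ≤ c * ((F.card : ℝ) / (1 - ε)) :=
    mul_le_mul_of_nonneg_left hsumF hc
  have hfinal : (M * ε + c / (1 - ε)) * (F.card : ℝ)
      = M * (ε * F.card) + c * ((F.card : ℝ) / (1 - ε)) := by ring
  by_cases hR : (F \ UL L).Nonempty
  · have hdecomp : F = L.foldr (· ∪ ·) (F \ UL L) := by
      rw [foldr_union]
      exact (Finset.union_sdiff_of_subset hsub).symm
    have h1 : h F ≤ (L.map h).sum + h (F \ UL L) := by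
      conv_lhs => rw [hdecomp]
      exact h_foldr H1 L _
    have h2 : h (F \ UL L) ≤ M * ((F \ UL L).card : ℝ) := hMcard _ hR
    have h3 : M * ((F \ UL L).card : ℝ) ≤ M * (ε * F.card) :=
      mul_le_mul_of_nonneg_left hcov hM
    linarith
  · have hFU : F = UL L := by
      rw [Finset.not_nonempty_iff_eq_empty] at hR
      exact Finset.Subset.antisymm (Finset.sdiff_eq_empty_iff_subset.mp hR) hsub
    cases L with
    | nil =>
      exfalso
      rw [UL_nil] at hFU
      exact hF.ne_empty hFU
    | cons B L' =>
      have hdecomp : F = L'.foldr (· ∪ ·) B := by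
        rw [foldr_union, hFU, UL_cons, Finset.union_comm]
      have h1 : h F ≤ (L'.map h).sum + h B := by
        conv_lhs => rw [hdecomp]
        exact h_foldr H1 L' B
      have e1 : (L'.map h).sum ≤ c * sumCard L' :=
        sum_map_h_le c L' (fun A hA => (htile A (by simp [hA])).2)
      have e2 : h B ≤ c * B.card := (htile B (by simp)).2
      have e3 : c * (B.card : ℝ) + c * sumCard L' = c * sumCard (B :: L') := by
        rw [sumCard_cons]; ring
      have e4 : (0:ℝ) ≤ M * (ε * F.card) := by
        have : (0:ℝ) ≤ (F.card : ℝ) := Nat.cast_nonneg _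
        positivity
      linarith

/-! ### Invariant sets, the quantity λ, and Følner nets -/

/-- `E` is a nonempty `(T, δ)`-invariant finite set. -/
def Inv (T : Finset S) (δ : ℝ) (E : Finset S) : Prop :=
  E.Nonempty ∧ ∀ t ∈ T, ((lT t E \ E).card : ℝ) ≤ δ * E.card

variable (h : Finset S → ℝ)

/-- Ratios `h E / |E|` over `(T,δ)`-invariant sets. -/
def ratioSet (T : Finset S) (δ : ℝ) : Set ℝ :=
  {x | ∃ E : Finset S, Inv T δ E ∧ x = h E / E.card}

noncomputable def alpha (T : Finset S) (δ : ℝ) : ℝ := sInf (ratioSet h T δ)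

def lamSet : Set ℝ := {x | ∃ T : Finset S, ∃ δ : ℝ, 0 < δ ∧ x = alpha h T δ}

/-- The candidate limit. -/
noncomputable def lam : ℝ := sSup (lamSet h)

variable {h}

section lamfacts

variable {M : ℝ} (H1 : ∀ A B : Finset S, h (A ∪ B) ≤ h A + h B)
  (hM0 : 0 ≤ M) (hM : ∀ s : S, h {s} ≤ M)
  (hex : ∀ (T : Finset S) (δ : ℝ), 0 < δ → ∃ E : Finset S, Inv T δ E)

include H1 hM0 hM in
lemma ratio_bounds {T : Finset S} {δ : ℝ} {x : ℝ} (hx : x ∈ ratioSet h T δ) :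
    0 ≤ x ∧ x ≤ M := by
  obtain ⟨E, hE, rfl⟩ := hx
  have hpos : (0:ℝ) < (E.card : ℝ) := by exact_mod_cast Finset.card_pos.mpr hE.1
  constructor
  · exact div_nonneg (h_nonneg H1 E) (le_of_lt hpos)
  · rw [div_le_iff₀ hpos]
    exact le_trans (h_le_M_card H1 hM E hE.1) (by linarith)

include hex in
lemma ratioSet_nonempty {T : Finset S} {δ : ℝ} (hδ : 0 < δ) :
    (ratioSet h T δ).Nonempty := by
  obtain ⟨E, hE⟩ := hex T δ hδ
  exact ⟨_, E, hE, rfl⟩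

include H1 hM0 hM in
lemma ratioSet_bddBelow (T : Finset S) (δ : ℝ) : BddBelow (ratioSet h T δ) :=
  ⟨0, fun x hx => (ratio_bounds H1 hM0 hM hx).1⟩

include H1 hM0 hM hex in
lemma lamSet_nonempty : (lamSet h).Nonempty := ⟨alpha h ∅ 1, ∅, 1, one_pos, rfl⟩

include H1 hM0 hM hex in
lemma lamSet_bddAbove : BddAbove (lamSet h) := by
  refine ⟨M, ?_⟩
  rintro x ⟨T, δ, hδ, rfl⟩
  obtain ⟨y, hy⟩ := ratioSet_nonempty hex hδ
  exact le_trans (csInf_le (ratioSet_bddBelow H1 hM0 hM T δ) hy)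
    (ratio_bounds H1 hM0 hM hy).2

include H1 hM0 hM hex in
lemma lam_nonneg : 0 ≤ lam h := by
  have h1 : (0:ℝ) ≤ alpha h ∅ 1 :=
    le_csInf (ratioSet_nonempty hex one_pos) (fun x hx => (ratio_bounds H1 hM0 hM hx).1)
  exact le_trans h1 (le_csSup (lamSet_bddAbove H1 hM0 hM hex) ⟨∅, 1, one_pos, rfl⟩)

include H1 hM0 hM hex in
lemma fact_lower {ε : ℝ} (hε : 0 < ε) :
    ∃ (T : Finset S) (δ : ℝ), 0 < δ ∧
      ∀ E : Finset S, Inv T δ E → lam h - ε ≤ h E / E.card := by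
  obtain ⟨a, ha, hlt⟩ := exists_lt_of_lt_csSup (lamSet_nonempty H1 hM0 hM hex)
    (show lam h - ε < lam h by linarith)
  obtain ⟨T, δ, hδ, rfl⟩ := ha
  refine ⟨T, δ, hδ, fun E hE => ?_⟩
  have h2 : alpha h T δ ≤ h E / (E.card : ℝ) :=
    csInf_le (ratioSet_bddBelow H1 hM0 hM T δ) (⟨E, hE, rfl⟩ : h E / E.card ∈ ratioSet h T δ)
  linarith

include H1 hM0 hM hex in
lemma fact_upper (T : Finset S) {δ : ℝ} (hδ : 0 < δ) {ε : ℝ} (hε : 0 < ε) :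
    ∃ E : Finset S, Inv T δ E ∧ h E ≤ (lam h + ε) * E.card := by
  have halpha : alpha h T δ ≤ lam h := le_csSup (lamSet_bddAbove H1 hM0 hM hex) ⟨T, δ, hδ, rfl⟩
  have : sInf (ratioSet h T δ) < lam h + ε := lt_of_le_of_lt halpha (by linarith)
  obtain ⟨x, hx, hxlt⟩ := exists_lt_of_csInf_lt (ratioSet_nonempty hex hδ) this
  obtain ⟨E, hE, rfl⟩ := hx
  refine ⟨E, hE, ?_⟩
  have hpos : (0:ℝ) < (E.card : ℝ) := by exact_mod_cast Finset.card_pos.mpr hE.1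
  have := (div_lt_iff₀ hpos).mp hxlt
  linarith

end lamfacts

/-- Any left Følner net is eventually `(T,δ)`-invariant. -/
lemma folner_ev_inv (N : LeftFolnerNet S) (T : Finset S) {δ : ℝ} (hδ : 0 < δ) :
    ∀ᶠ i in (atTop : Filter N.I), Inv T δ (N.F i) := by
  have key : ∀ t ∈ T, ∀ᶠ i in (atTop : Filter N.I),
      ((lT t (N.F i) \ N.F i).card : ℝ) ≤ δ * (N.F i).card := by
    intro t _
    have h2 : ∀ᶠ i in (atTop : Filter N.I),
        (((N.F i).image (t * ·) \ N.F i).card : ℝ) / ((N.F i).card : ℝ) < δ :=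
      (N.folner t).eventually_lt_const hδ
    filter_upwards [h2] with i hi
    have hpos : (0:ℝ) < ((N.F i).card : ℝ) := by
      exact_mod_cast Finset.card_pos.mpr (N.nonempty i)
    exact le_of_lt ((div_lt_iff₀ hpos).mp hi)
  have := (Filter.eventually_all_finset T).mpr key
  filter_upwards [this] with i hi
  exact ⟨N.nonempty i, hi⟩

lemma exists_inv (N : LeftFolnerNet S) (T : Finset S) {δ : ℝ} (hδ : 0 < δ) :
    ∃ E : Finset S, Inv T δ E := by
  haveI := N.dir
  have := folner_ev_inv N T hδ
  rw [Filter.eventually_atTop] at this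
  obtain ⟨a, ha⟩ := this
  exact ⟨N.F a, ha a le_rfl⟩

/-- Simultaneous positive lower bound for finitely many positive reals. -/
lemma exists_pos_le (m : ℕ) (f : ℕ → ℝ) (hf : ∀ i, i < m → 0 < f i) :
    ∃ δ : ℝ, 0 < δ ∧ ∀ i, i < m → δ ≤ f i := by
  induction m with
  | zero => exact ⟨1, one_pos, fun i hi => absurd hi (by omega)⟩
  | succ m ih =>
    obtain ⟨δ, hδ, hle⟩ := ih (fun i hi => hf i (by omega))
    refine ⟨min δ (f m), lt_min hδ (hf m (by omega)), fun i hi => ?_⟩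
    rcases Nat.lt_succ_iff_lt_or_eq.mp hi with hcase | hcase
    · exact le_trans (min_le_left _ _) (hle i hcase)
    · subst hcase; exact min_le_right _ _

/-- Construction of the tower of near-optimal, increasingly invariant sets. -/
lemma tower {c ε : ℝ} (hε0 : 0 < ε) (hε1 : ε < 1)
    (hget : ∀ (T : Finset S) (δ : ℝ), 0 < δ →
      ∃ E : Finset S, Inv T δ E ∧ h E ≤ c * E.card) (m : ℕ) :
    ∃ KK : ℕ → Finset S,
      (∀ j, j < m → (KK j).Nonempty) ∧
      (∀ j, j < m → h (KK j) ≤ c * (KK j).card) ∧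
      (∀ i j, i < j → j < m → ∀ k ∈ KK i,
        ((lT k (KK j) \ KK j).card : ℝ) ≤ (ε^2 * (1-ε) / (8 * (KK i).card)) * (KK j).card) := by
  induction m with
  | zero => exact ⟨fun _ => ∅, fun j hj => absurd hj (by omega),
      fun j hj => absurd hj (by omega), fun i j _ hj => absurd hj (by omega)⟩
  | succ m ih =>
    obtain ⟨KK, h1, h2, h3⟩ := ih
    have hpos : ∀ i, i < m → 0 < ε^2 * (1-ε) / (8 * ((KK i).card : ℝ)) := by
      intro i hi
      have : (0:ℝ) < ((KK i).card : ℝ) := by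
        exact_mod_cast Finset.card_pos.mpr (h1 i hi)
      have h1e : (0:ℝ) < 1 - ε := by linarith
      positivity
    obtain ⟨δ, hδ, hδle⟩ := exists_pos_le m _ hpos
    obtain ⟨Knew, hKinv, hKh⟩ := hget ((Finset.range m).biUnion KK) δ hδ
    refine ⟨fun j => if j = m then Knew else KK j, ?_, ?_, ?_⟩
    · intro j hj
      by_cases hjm : j = m
      · simp only [if_pos hjm]; exact hKinv.1
      · simp only [if_neg hjm]; exact h1 j (by omega)
    · intro j hj
      by_cases hjm : j = m
      · simp only [if_pos hjm]; exact hKh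
      · simp only [if_neg hjm]; exact h2 j (by omega)
    · intro i j hij hj k hk
      have him : i ≠ m := by omega
      simp only [if_neg him] at hk ⊢
      by_cases hjm : j = m
      · simp only [if_pos hjm]
        have him' : i < m := by omega
        have hkT : k ∈ (Finset.range m).biUnion KK :=
          Finset.mem_biUnion.mpr ⟨i, Finset.mem_range.mpr him', hk⟩
        have hb := hKinv.2 k hkT
        refine le_trans hb (mul_le_mul_of_nonneg_right (hδle i him') (Nat.cast_nonneg _))
      · simp only [if_neg hjm]
        exact h3 i j hij (by omega) k hk

section main

variable {M : ℝ} (H1 : ∀ A B : Finset S, h (A ∪ B) ≤ h A + h B)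
  (H2 : ∀ (s : S) (A : Finset S), h (A.image (· * s)) ≤ h A)
  (hM0 : 0 ≤ M) (hM : ∀ s : S, h {s} ≤ M)
  (hex : ∀ (T : Finset S) (δ : ℝ), 0 < δ → ∃ E : Finset S, Inv T δ E)

include H1 hM0 hM hex in
lemma lower_ev (N : LeftFolnerNet S) {ε' : ℝ} (hε' : 0 < ε') :
    ∀ᶠ i in (atTop : Filter N.I), lam h - ε' ≤ h (N.F i) / ((N.F i).card : ℝ) := by
  obtain ⟨T, δ, hδ, hT⟩ := fact_lower H1 hM0 hM hex hε'
  filter_upwards [folner_ev_inv N T hδ] with i hi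
  exact hT _ hi

include H1 H2 hM0 hM hex in
lemma upper_ev (N : LeftFolnerNet S) {ε' : ℝ} (hε' : 0 < ε') :
    ∀ᶠ i in (atTop : Filter N.I),
      h (N.F i) / ((N.F i).card : ℝ) ≤ lam h + ε' := by
  have hlam0 : 0 ≤ lam h := lam_nonneg H1 hM0 hM hex
  set lam0 := lam h with hlam0def
  set ε := min (1/2) (ε' / (2 * lam0 + M + 2)) with hεdef
  have hden : (0:ℝ) < 2 * lam0 + M + 2 := by linarith
  have hε0 : 0 < ε := lt_min (by norm_num) (div_pos hε' hden)
  have hε2 : ε ≤ 1/2 := min_le_left _ _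
  have hεe : ε * (2 * lam0 + M + 2) ≤ ε' := by
    have := min_le_right (1/2) (ε' / (2 * lam0 + M + 2))
    calc ε * (2 * lam0 + M + 2) ≤ (ε' / (2 * lam0 + M + 2)) * (2 * lam0 + M + 2) :=
          mul_le_mul_of_nonneg_right this (by linarith)
      _ = ε' := by field_simp
  have hε1 : ε < 1 := by linarith
  have h1ε : (0:ℝ) < 1 - ε := by linarith
  -- number of scales
  obtain ⟨m, hm⟩ := exists_pow_lt_of_lt_one hε0 (show 1 - ε/2 < 1 by linarith)
  -- tower
  have hget : ∀ (T : Finset S) (δ : ℝ), 0 < δ →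
      ∃ E : Finset S, Inv T δ E ∧ h E ≤ (lam0 + ε) * E.card := by
    intro T δ hδ
    exact fact_upper H1 hM0 hM hex T hδ hε0
  obtain ⟨KK, hKne, hKh, hKinv⟩ := tower hε0 hε1 hget m
  -- required invariance of the Følner sets
  have hθpos : ∀ j, j < m → 0 < ε^2 / (8 * ((KK j).card : ℝ)) := by
    intro j hj
    have : (0:ℝ) < ((KK j).card : ℝ) := by
      exact_mod_cast Finset.card_pos.mpr (hKne j hj)
    positivity
  obtain ⟨δ0, hδ0, hδ0le⟩ := exists_pos_le m _ hθpos
  filter_upwards [folner_ev_inv N ((Finset.range m).biUnion KK) hδ0] with i hi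
  set F := N.F i with hFdef
  have hF : F.Nonempty := N.nonempty i
  have hFpos : (0:ℝ) < (F.card : ℝ) := by exact_mod_cast Finset.card_pos.mpr hF
  have hFinv : ∀ j, j < m → ∀ k ∈ KK j,
      ((lT k F \ F).card : ℝ) ≤ (ε^2 / (8 * ((KK j).card : ℝ))) * F.card := by
    intro j hj k hk
    have hkT : k ∈ (Finset.range m).biUnion KK :=
      Finset.mem_biUnion.mpr ⟨j, Finset.mem_range.mpr hj, hk⟩
    have := hi.2 k hkT
    exact le_trans this (mul_le_mul_of_nonneg_right (hδ0le j hj) (Nat.cast_nonneg _))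
  obtain ⟨L, htile, hdis, hsub, hcov⟩ :=
    multi H2 hε0 hε2 m KK hKne hKh hKinv F hF hFinv m le_rfl
  have hcov' : ((F \ UL L).card : ℝ) ≤ ε * F.card := by
    have hmax : max (ε * (F.card : ℝ)) ((1 - ε/2)^m * F.card) = ε * F.card := by
      apply max_eq_left
      exact mul_le_mul_of_nonneg_right (le_of_lt hm) (le_of_lt hFpos)
    rw [hmax] at hcov
    exact hcov
  have hbound : h F ≤ (M * ε + (lam0 + ε) / (1 - ε)) * F.card :=
    cover_bound H1 hM0 (by linarith) (h_le_M_card H1 hM) hε0 hε1 hF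
      (fun A hA => ⟨(htile A hA).1, (htile A hA).2.1⟩) hdis hsub hcov'
  have hratio : h F / (F.card : ℝ) ≤ M * ε + (lam0 + ε) / (1 - ε) := by
    rw [div_le_iff₀ hFpos]
    linarith
  have harith : M * ε + (lam0 + ε) / (1 - ε) ≤ lam0 + ε' := by
    have key : (lam0 + ε) / (1 - ε) ≤ lam0 + ε * (2 * lam0 + 2) := by
      rw [div_le_iff₀ h1ε]
      nlinarith [mul_nonneg (mul_nonneg hε0.le (show (0:ℝ) ≤ 1 - 2*ε by linarith))
        (show (0:ℝ) ≤ lam0 + 1 by linarith)]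
    linarith
  linarith

end main
end OW

/-- Theorem 1.1 (Ornstein–Weiss lemma for cancellative left-amenable semigroups):
if `S` is a cancellative semigroup admitting a left-Følner net, and
`h` is a subadditive, right-subinvariant real-valued function on finite subsets of `S`
which is bounded on singletons, then there is `λ ≥ 0`, depending only on `h`, such that
`h(F_i)/|F_i| → λ` for every left-Følner net `(F_i)` of `S`. -/
theorem ornstein_weiss_lemma.{u, v, w} {S : Type u} [Semigroup S] [IsCancelMul S]
    [DecidableEq S]
    (hamen : Nonempty (LeftFolnerNet.{u, v} S))
    (h : Finset S → ℝ)
    (H1 : ∀ A B : Finset S, h (A ∪ B) ≤ h A + h B)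
    (H2 : ∀ (s : S) (A : Finset S), h (A.image (· * s)) ≤ h A)
    (H3 : ∃ M : ℝ, 0 ≤ M ∧ ∀ s : S, h {s} ≤ M) :
    ∃ lam : ℝ, 0 ≤ lam ∧
      ∀ N : LeftFolnerNet.{u, w} S,
        Filter.Tendsto (fun i => h (N.F i) / ((N.F i).card : ℝ))
          Filter.atTop (nhds lam) := by
  classical
  obtain ⟨M, hM0, hM⟩ := H3
  obtain ⟨N0⟩ := hamen
  have hex : ∀ (T : Finset S) (δ : ℝ), 0 < δ → ∃ E : Finset S, OW.Inv T δ E :=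
    fun T δ hδ => OW.exists_inv N0 T hδ
  refine ⟨OW.lam h, OW.lam_nonneg H1 hM0 hM hex, fun N => ?_⟩
  rw [Metric.tendsto_nhds]
  intro ε hε
  have hlow := OW.lower_ev H1 hM0 hM hex N (show (0:ℝ) < ε/2 by linarith)
  have hup := OW.upper_ev H1 H2 hM0 hM hex N (show (0:ℝ) < ε/2 by linarith)
  filter_upwards [hlow, hup] with i h1 h2
  rw [Real.dist_eq]
  have habs : |h (N.F i) / ((N.F i).card : ℝ) - OW.lam h| ≤ ε/2 :=
    abs_le.mpr ⟨by linarith, by linarith⟩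
  linarith
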